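/- Let A₁ = [1, −1] and A₂ = [−1, 1] be 1×2 payoff matrices (so n = 1, m = 2), and consider the 6×6 OGDA iterative matrices for the period-2 game. For every step size η > 0, the one-period product Ã = M_OGDA(A₂, A₁)·M_OGDA(A₁, A₂) has 4η² + (1/2)√(64η⁴ + 8η² + 1) + 1/2 as an eigenvalue; this number is strictly greater than 1, so the spectral radius of Ã is strictly greater than 1. -/

import Mathlib

open Matrix

/-- The OGDA iterative matrix
`M_OGDA(A, A') = [[I, −2ηA, 0, ηA'], [2ηAᵀ, I, −ηA'ᵀ, 0], [I, 0, 0, 0], [0, I, 0, 0]]`. -/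
noncomputable def MOGDA {n m : ℕ} (η : ℝ) (A A' : Matrix (Fin n) (Fin m) ℝ) :
    Matrix ((Fin n ⊕ Fin m) ⊕ (Fin n ⊕ Fin m)) ((Fin n ⊕ Fin m) ⊕ (Fin n ⊕ Fin m)) ℝ :=
  fromBlocks
    (fromBlocks 1 ((-(2 * η)) • A) ((2 * η) • Aᵀ) 1)
    (fromBlocks 0 (η • A') ((-η) • A'ᵀ) 0)
    1 0

/-- `μ : ℂ` is an eigenvalue of the real matrix `M`. -/
def IsEig {d : Type*} [Fintype d] (M : Matrix d d ℝ) (μ : ℂ) : Prop :=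
  ∃ v : d → ℂ, v ≠ 0 ∧ (M.map (fun x : ℝ => (x : ℂ))).mulVec v = μ • v

/-- `A₁ = [1, −1]`. -/
noncomputable def A1 : Matrix (Fin 1) (Fin 2) ℝ := !![1, -1]

/-- `A₂ = [−1, 1]`. -/
noncomputable def A2 : Matrix (Fin 1) (Fin 2) ℝ := !![-1, 1]

/-- For every step size `η > 0`, the one-period product `Ã = M_OGDA(A₂, A₁)·M_OGDA(A₁, A₂)`
of the OGDA iterative matrices for the period-2 game `A₁ = [1,−1]`, `A₂ = [−1,1]` has the real
number `4η² + (1/2)√(64η⁴ + 8η² + 1) + 1/2` as an eigenvalue; this number is `> 1`, so the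
spectral radius of `Ã` is `> 1`. -/

theorem stmt15 (η : ℝ) (hη : 0 < η) :
    IsEig (MOGDA η A2 A1 * MOGDA η A1 A2)
        (((4 * η ^ 2 + (1 / 2) * Real.sqrt (64 * η ^ 4 + 8 * η ^ 2 + 1) + 1 / 2 : ℝ) : ℂ)) ∧
    1 < 4 * η ^ 2 + (1 / 2) * Real.sqrt (64 * η ^ 4 + 8 * η ^ 2 + 1) + 1 / 2 ∧
    ∃ μ : ℂ, IsEig (MOGDA η A2 A1 * MOGDA η A1 A2) μ ∧ 1 < ‖μ‖ := by
  set s : ℝ := Real.sqrt (64 * η ^ 4 + 8 * η ^ 2 + 1) with hsdef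
  have hs : s ^ 2 = 64 * η ^ 4 + 8 * η ^ 2 + 1 := Real.sq_sqrt (by positivity)
  have hs0 : 0 ≤ s := Real.sqrt_nonneg _
  have hs1 : 1 ≤ s := by nlinarith
  have hlam : 1 < 4 * η ^ 2 + (1 / 2) * s + 1 / 2 := by nlinarith
  have heig : IsEig (MOGDA η A2 A1 * MOGDA η A1 A2)
      (((4 * η ^ 2 + (1 / 2) * s + 1 / 2 : ℝ) : ℂ)) := by
    refine ⟨Sum.elim (Sum.elim ![(((1 + s) / 2 : ℝ) : ℂ)]
        ![((-(η * (2 + 8 * η ^ 2 + s)) : ℝ) : ℂ), (((η * (2 + 8 * η ^ 2 + s)) : ℝ) : ℂ)])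
        (Sum.elim ![((1 + 8 * η ^ 2 : ℝ) : ℂ)] ![0, 0]), ?_, ?_⟩
    · intro h
      have h2 := congrFun h (Sum.inr (Sum.inl 0))
      simp only [Sum.elim_inr, Sum.elim_inl, Matrix.cons_val_zero, Pi.zero_apply] at h2
      rw [Complex.ofReal_eq_zero] at h2
      nlinarith
    · have hsC : (s : ℂ) ^ 2 = 64 * (η : ℂ) ^ 4 + 8 * (η : ℂ) ^ 2 + 1 := by
        exact_mod_cast hs
      funext i
      obtain (i | i) | (i | i) := i <;> fin_cases i <;>
        simp [Matrix.mulVec, Matrix.mul_apply, dotProduct, Fintype.sum_sum_type,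
            Fin.sum_univ_succ, MOGDA, A1, A2, fromBlocks, Matrix.one_apply] <;>
        push_cast <;> ring_nf <;>
        first
          | linear_combination ((5:ℂ)/4) * hsC
          | linear_combination ((η:ℂ)/2 - 1) * hsC
          | linear_combination (-(η:ℂ)/2 - 1) * hsC
          | linear_combination (1:ℂ) * hsC
          | linear_combination ((η:ℂ) + 1) * hsC
          | linear_combination ((η:ℂ)/2 + 3/4) * hsC
          | linear_combination (-(1:ℂ)/4) * hsC
          | linear_combination ((η:ℂ)/2) * hsC
          | linear_combination (-(η:ℂ)/2) * hsC
  refine ⟨heig, hlam, ⟨_, heig, ?_⟩⟩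
  rw [Complex.norm_real, Real.norm_eq_abs, abs_of_pos (by linarith)]
  exact hlam
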